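/- Let n ≥ k ≥ 3 be integers and write n = ck + r with 0 ≤ r ≤ k−1, c ≥ 2. Then k·MMS(n,k)/MMS(n+k,k) ≤ (1 − (k−1)/(k(c+2)))^c ≤ 25/36, where MMS(n,k) = C(n,c)/(k − r + r(c+1)/(n−c)). In particular this ratio is bounded away from 1. -/
import Mathlib


lemma aux_df (x : ℚ) : ∀ (c n m : ℕ),
    (∀ i < c, ((n - i : ℕ) : ℚ) ≤ ((m - i : ℕ) : ℚ) * x) →
    ((n.descFactorial c : ℚ) ≤ (m.descFactorial c : ℚ) * x ^ c) := by
  intro c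
  induction c with
  | zero => intro n m _; simp
  | succ c ih =>
    intro n m h
    have h1 := h c (Nat.lt_succ_self c)
    have ih' := ih n m (fun i hi => h i (hi.trans (Nat.lt_succ_self c)))
    rw [Nat.descFactorial_succ, Nat.descFactorial_succ]
    push_cast
    have hnn : (0:ℚ) ≤ ((m - c : ℕ) : ℚ) * x := le_trans (Nat.cast_nonneg _) h1
    calc ((n - c : ℕ) : ℚ) * (n.descFactorial c : ℚ)
        ≤ (((m - c : ℕ) : ℚ) * x) * ((m.descFactorial c : ℚ) * x ^ c) :=
          mul_le_mul h1 ih' (Nat.cast_nonneg _) hnn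
      _ = ((m - c : ℕ) : ℚ) * (m.descFactorial c : ℚ) * x ^ (c + 1) := by ring

lemma aux_key (n k c r : ℕ) (hk : 3 ≤ k) (hc : 2 ≤ c)
    (hnck : n = c * k + r) (hrk : r ≤ k - 1) :
    (k : ℚ) * (n.choose c : ℚ) / ((n + k).choose (c + 1) : ℚ)
      ≤ (1 - ((k : ℚ) - 1) / ((k : ℚ) * ((c : ℚ) + 2))) ^ c := by
  set x : ℚ := 1 - ((k : ℚ) - 1) / ((k : ℚ) * ((c : ℚ) + 2)) with hxdef
  have hkq : (3:ℚ) ≤ k := by exact_mod_cast hk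
  have hcq : (2:ℚ) ≤ c := by exact_mod_cast hc
  have hden : (0:ℚ) < (k:ℚ) * ((c:ℚ) + 2) := by positivity
  have hx0 : (0:ℚ) ≤ x := by rw [hxdef, sub_nonneg, div_le_one hden]; nlinarith
  have hckn : c * k ≤ n := by omega
  have hcn : c < n := by nlinarith [hckn]
  have hnub : n + 1 ≤ (c+1) * k := by -- n ≤ ck + k - 1
    have : r + 1 ≤ k := by omega
    nlinarith
  -- per-factor bound
  have hfac : ∀ i < c, ((n - i : ℕ) : ℚ) ≤ ((n + k - 1 - i : ℕ) : ℚ) * x := by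
    intro i hi
    have hin : i ≤ n := le_of_lt (hi.trans hcn)
    have him : i ≤ n + k - 1 := by omega
    have e1 : ((n - i : ℕ) : ℚ) = (n:ℚ) - i := by
      rw [Nat.cast_sub hin]
    have e2 : ((n + k - 1 - i : ℕ) : ℚ) = (n:ℚ) + k - 1 - i := by
      have : n + k - 1 - i = n + k - (1 + i) := by omega
      rw [this, Nat.cast_sub (by omega)]
      push_cast; ring
    rw [e1, e2, hxdef]
    have hiq : (i:ℚ) < c := by exact_mod_cast hi
    have hnq : (n:ℚ) + 1 ≤ ((c:ℚ)+1) * k := by exact_mod_cast hnub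
    have h1 : 1 - ((k : ℚ) - 1) / ((k : ℚ) * ((c : ℚ) + 2))
        = ((k:ℚ)*((c:ℚ)+2) - ((k:ℚ)-1))/((k:ℚ)*((c:ℚ)+2)) := by field_simp
    rw [h1, ← mul_div_assoc, le_div_iff₀ hden]
    -- (n-i)*(k(c+2)) ≤ (n+k-1-i)*(kc+k+1)
    nlinarith [mul_nonneg (by linarith : (0:ℚ) ≤ (k:ℚ)-1)
      (by nlinarith : (0:ℚ) ≤ (k:ℚ)*c + k + 1 - ((n:ℚ) - i))]
  have hdf : ((n.descFactorial c : ℚ)) ≤ ((n + k - 1).descFactorial c : ℚ) * x ^ c :=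
    aux_df x c n (n + k - 1) hfac
  -- cast identities
  have e1 : (c+1).factorial * n.choose c = (c+1) * n.descFactorial c := by
    rw [Nat.factorial_succ, Nat.descFactorial_eq_factorial_mul_choose]; ring
  have e2 : (n+k).choose (c+1) * (c+1).factorial = (n+k) * (n + k - 1).descFactorial c := by
    have h : n + k = (n + k - 1) + 1 := by omega
    rw [mul_comm, ← Nat.descFactorial_eq_factorial_mul_choose, h,
      Nat.succ_descFactorial_succ]
    simp
  have hBpos : (0:ℚ) < ((n + k).choose (c+1) : ℚ) := by
    exact_mod_cast Nat.choose_pos (by omega)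
  rw [div_le_iff₀ hBpos]
  have hfacpos : (0:ℚ) < ((c+1).factorial : ℚ) := by
    exact_mod_cast Nat.factorial_pos (c+1)
  apply le_of_mul_le_mul_right _ hfacpos
  have e1' : ((n.choose c : ℚ)) * ((c+1).factorial : ℚ) = ((c:ℚ)+1) * (n.descFactorial c : ℚ) := by
    exact_mod_cast congrArg (Nat.cast (R := ℚ)) (by rw [mul_comm]; exact e1)
  have e2' : (((n+k).choose (c+1) : ℚ)) * ((c+1).factorial : ℚ)
      = ((n:ℚ)+k) * ((n + k - 1).descFactorial c : ℚ) := by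
    exact_mod_cast congrArg (Nat.cast (R := ℚ)) e2
  have lhs_eq : (k:ℚ) * (n.choose c : ℚ) * ((c+1).factorial : ℚ)
      = ((k:ℚ) * ((c:ℚ)+1)) * (n.descFactorial c : ℚ) := by
    rw [mul_assoc, e1']; ring
  have rhs_eq : x ^ c * ((n+k).choose (c+1) : ℚ) * ((c+1).factorial : ℚ)
      = ((n:ℚ)+k) * (((n + k - 1).descFactorial c : ℚ) * x ^ c) := by
    rw [mul_assoc, e2']; ring
  rw [lhs_eq, rhs_eq]
  have hk1 : (k:ℚ) * ((c:ℚ)+1) ≤ (n:ℚ)+k := by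
    have : (c*k : ℚ) ≤ n := by exact_mod_cast hckn
    nlinarith
  exact mul_le_mul hk1 hdf (Nat.cast_nonneg _) (by positivity)

lemma aux_part2 (k c : ℕ) (hk : 3 ≤ k) (hc : 2 ≤ c) :
    (1 - ((k : ℚ) - 1) / ((k : ℚ) * ((c : ℚ) + 2))) ^ c ≤ 25 / 36 := by
  have hkq : (3:ℚ) ≤ k := by exact_mod_cast hk
  have hcq : (2:ℚ) ≤ c := by exact_mod_cast hc
  have hkpos : (0:ℚ) < k := by linarith
  have hden : (0:ℚ) < (k:ℚ) * ((c:ℚ) + 2) := by positivity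
  have hx0 : (0:ℚ) ≤ 1 - ((k : ℚ) - 1) / ((k : ℚ) * ((c : ℚ) + 2)) := by
    rw [sub_nonneg, div_le_one hden]; nlinarith
  have hxy : 1 - ((k : ℚ) - 1) / ((k : ℚ) * ((c : ℚ) + 2)) ≤ (3*(c:ℚ)+4)/(3*(c:ℚ)+6) := by
    have h1 : 1 - ((k : ℚ) - 1) / ((k : ℚ) * ((c : ℚ) + 2))
        = ((k:ℚ)*((c:ℚ)+2) - ((k:ℚ)-1))/((k:ℚ)*((c:ℚ)+2)) := by field_simp
    rw [h1, div_le_div_iff₀ hden (by positivity)]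
    nlinarith
  have step1 : (1 - ((k : ℚ) - 1) / ((k : ℚ) * ((c : ℚ) + 2))) ^ c
      ≤ ((3*(c:ℚ)+4)/(3*(c:ℚ)+6)) ^ c := pow_le_pow_left₀ hx0 hxy c
  refine step1.trans ?_
  rcases Nat.lt_or_ge c 4 with h4 | h4
  · interval_cases c <;> norm_num
  · have hc4 : (4:ℚ) ≤ c := by exact_mod_cast h4
    set t : ℚ := 2/(3*(c:ℚ)+6) with ht
    have htpos : 0 < t := by positivity
    have htle : t ≤ 1/9 := by rw [ht, div_le_div_iff₀ (by linarith) (by norm_num)]; linarith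
    have h1t : (0:ℚ) < 1 + t := by linarith
    have h1 : (3*(c:ℚ)+4)/(3*(c:ℚ)+6) = 1 - t := by rw [ht]; field_simp; ring
    have h2 : 1 - t ≤ 1/(1+t) := by rw [le_div_iff₀ h1t]; nlinarith
    have hct : (0:ℚ) < 1 + (c:ℚ)*t := by positivity
    have h3 : 1 + (c:ℚ)*t ≤ (1+t)^c := by
      have := one_add_mul_le_pow (a := t) (by linarith) c
      linarith
    calc ((3*(c:ℚ)+4)/(3*(c:ℚ)+6)) ^ c = (1-t)^c := by rw [h1]
      _ ≤ (1/(1+t))^c := pow_le_pow_left₀ (by linarith) h2 c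
      _ = 1/(1+t)^c := by rw [div_pow, one_pow]
      _ ≤ 1/(1+(c:ℚ)*t) := by
          apply one_div_le_one_div_of_le hct h3
      _ ≤ 25/36 := by
          have hval : 1 + (c:ℚ)*t = (5*(c:ℚ)+6)/(3*(c:ℚ)+6) := by
            rw [ht]; field_simp; ring
          rw [hval, one_div_div, div_le_div_iff₀ (by linarith) (by norm_num)]
          linarith

theorem stmt_9 (n k c r : ℕ) (hk : 3 ≤ k) (hkn : k ≤ n) (hc : 2 ≤ c)
    (hnck : n = c * k + r) (hrk : r ≤ k - 1) :
    (k : ℚ) * ((n.choose c : ℚ) / ((k : ℚ) - r + (r : ℚ) * ((c : ℚ) + 1) / ((n : ℚ) - c))) /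
        (((n + k).choose (c + 1) : ℚ) /
          ((k : ℚ) - r + (r : ℚ) * ((c : ℚ) + 2) / ((n : ℚ) + k - (c + 1))))
      ≤ (1 - ((k : ℚ) - 1) / ((k : ℚ) * ((c : ℚ) + 2))) ^ c ∧
    (1 - ((k : ℚ) - 1) / ((k : ℚ) * ((c : ℚ) + 2))) ^ c ≤ 25 / 36 := by
  refine ⟨?_, aux_part2 k c hk hc⟩
  set x : ℚ := 1 - ((k : ℚ) - 1) / ((k : ℚ) * ((c : ℚ) + 2)) with hxdef
  have hkq : (3:ℚ) ≤ k := by exact_mod_cast hk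
  have hcq : (2:ℚ) ≤ c := by exact_mod_cast hc
  have hckn : c * k ≤ n := by omega
  have hcn : c < n := by nlinarith [hckn]
  have hcnq : (c:ℚ) < n := by exact_mod_cast hcn
  have hnub : n + 1 ≤ (c+1) * k := by
    have : r + 1 ≤ k := by omega
    nlinarith
  have hnubq : (n:ℚ) + 1 ≤ ((c:ℚ)+1) * k := by exact_mod_cast hnub
  have hrq : (r:ℚ) + 1 ≤ k := by exact_mod_cast (by omega : r + 1 ≤ k)
  have hnc : (0:ℚ) < (n:ℚ) - c := by linarith
  have hnkc : (0:ℚ) < (n:ℚ) + k - ((c:ℚ) + 1) := by linarith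
  -- denominators
  set D1 : ℚ := (k : ℚ) - r + (r : ℚ) * ((c : ℚ) + 1) / ((n : ℚ) - c) with hD1def
  set D2 : ℚ := (k : ℚ) - r + (r : ℚ) * ((c : ℚ) + 2) / ((n : ℚ) + k - ((c:ℚ) + 1)) with hD2def
  have hD1pos : 0 < D1 := by
    have h2 : (0:ℚ) ≤ (r : ℚ) * ((c : ℚ) + 1) / ((n : ℚ) - c) := by positivity
    rw [hD1def]; linarith
  have hD2pos : 0 < D2 := by
    have h2 : (0:ℚ) ≤ (r : ℚ) * ((c : ℚ) + 2) / ((n : ℚ) + k - ((c:ℚ)+1)) := by positivity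
    rw [hD2def]; linarith
  have hD21 : D2 ≤ D1 := by
    rw [hD1def, hD2def]
    have : (r : ℚ) * ((c : ℚ) + 2) / ((n : ℚ) + k - ((c:ℚ)+1))
        ≤ (r : ℚ) * ((c : ℚ) + 1) / ((n : ℚ) - c) := by
      rw [div_le_div_iff₀ hnkc hnc]
      nlinarith [mul_nonneg (Nat.cast_nonneg (α := ℚ) r)
        (by linarith : (0:ℚ) ≤ ((c:ℚ)+1)*k - 1 - n)]
    linarith
  have hA : (0:ℚ) ≤ (n.choose c : ℚ) := Nat.cast_nonneg _
  have hBpos : (0:ℚ) < ((n + k).choose (c+1) : ℚ) := by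
    exact_mod_cast Nat.choose_pos (by omega)
  have habs : ∀ a b d1 d2 : ℚ, d1 ≠ 0 → d2 ≠ 0 → b ≠ 0 →
      (a / d1) / (b / d2) = (a / b) * (d2 / d1) := by
    intros a b d1 d2 h1 h2 h3
    rw [div_div_div_comm, div_div_eq_mul_div, mul_div_assoc]
  have heq : (k : ℚ) * ((n.choose c : ℚ) / D1) / (((n + k).choose (c + 1) : ℚ) / D2)
      = ((k : ℚ) * (n.choose c : ℚ) / ((n + k).choose (c + 1) : ℚ)) * (D2 / D1) := by
    rw [mul_div_assoc', habs _ _ _ _ hD1pos.ne' hD2pos.ne' hBpos.ne']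
  rw [heq]
  have hkey := aux_key n k c r hk hc hnck hrk
  have hratio : D2 / D1 ≤ 1 := by rw [div_le_one hD1pos]; exact hD21
  have hfrac : (0:ℚ) ≤ (k : ℚ) * (n.choose c : ℚ) / ((n + k).choose (c + 1) : ℚ) := by
    positivity
  calc ((k : ℚ) * (n.choose c : ℚ) / ((n + k).choose (c + 1) : ℚ)) * (D2 / D1)
      ≤ ((k : ℚ) * (n.choose c : ℚ) / ((n + k).choose (c + 1) : ℚ)) * 1 :=
        mul_le_mul_of_nonneg_left hratio hfrac
    _ = (k : ℚ) * (n.choose c : ℚ) / ((n + k).choose (c + 1) : ℚ) := mul_one _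
    _ ≤ x ^ c := hkey
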